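/- Let ε ∈ (11/12, 1), let T be an infinite square-free string over the alphabet {1,2,3}, and let S be an infinite binary weak (12ε−11)-synchronization string over {0,1}. Let W be the infinite string over {1,2,3,4} that agrees with T except that, for each i, the i-th occurrence of the symbol 1 in T is replaced by the symbol 4 if and only if S[i] = 1. Then W is an infinite ε-synchronization string over an alphabet of size four. -/

import Mathlib

/-- The length of a longest common subsequence of two strings (lists). -/
noncomputable def lcsLen {α : Type*} (S T : List α) : ℕ :=
  sSup {n | ∃ U : List α, U.length = n ∧ U.Sublist S ∧ U.Sublist T}

/-- The edit distance (insertions/deletions) between two strings, via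
`ED(S,T) = |S| + |T| - 2·LCS(S,T)`. -/
noncomputable def editDistance {α : Type*} (S T : List α) : ℕ :=
  S.length + T.length - 2 * lcsLen S T

/-- `strSlice S a b` is the substring `S[a, b)` of `S` (1-indexed, `b` excluded). -/
def strSlice {α : Type*} (S : List α) (a b : ℕ) : List α :=
  (S.drop (a - 1)).take (b - a)

/-- `islice f a b` is the substring `f[a, b)` of the infinite string `f`
(1-indexed, `b` excluded). -/
def islice {α : Type*} (f : ℕ → α) (a b : ℕ) : List α :=
  (List.range (b - a)).map fun t => f (a + t)

/-- `S` is an ε-synchronization string: for all `1 ≤ i < j < k ≤ |S| + 1`,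
`ED(S[i,j), S[j,k)) > (1-ε)(k-i)`. -/
def IsSyncString {α : Type*} (ε : ℝ) (S : List α) : Prop :=
  ∀ i j k : ℕ, 1 ≤ i → i < j → j < k → k ≤ S.length + 1 →
    (1 - ε) * ((k : ℝ) - (i : ℝ)) < (editDistance (strSlice S i j) (strSlice S j k) : ℝ)

/-- `S` is an ε-synchronization circle: every cyclic rotation of `S` is an
ε-synchronization string. -/
def IsSyncCircle {α : Type*} (ε : ℝ) (S : List α) : Prop :=
  ∀ i : ℕ, 1 ≤ i → i ≤ S.length → IsSyncString ε (S.rotate (i - 1))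

/-- An infinite ε-synchronization string (1-indexed). -/
def IsInfSyncString {α : Type*} (ε : ℝ) (f : ℕ → α) : Prop :=
  ∀ i j k : ℕ, 1 ≤ i → i < j → j < k →
    (1 - ε) * ((k : ℝ) - (i : ℝ)) < (editDistance (islice f i j) (islice f j k) : ℝ)

/-- `S` is a `c`-long-distance ε-synchronization string: for all
`1 ≤ i < j ≤ i' < j' ≤ |S| + 1` with `l = (j-i)+(j'-i')`, if the two intervals
are adjacent (`i' = j`) or `l > c · log |S|`, then
`ED(S[i,j), S[i',j')) > (1-ε)·l`. -/
noncomputable def IsLongDistSyncString {α : Type*} (c ε : ℝ) (S : List α) : Prop :=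
  ∀ i j i' j' : ℕ, 1 ≤ i → i < j → j ≤ i' → i' < j' → j' ≤ S.length + 1 →
    (i' = j ∨ c * Real.log (S.length : ℝ) < ((j : ℝ) - i) + ((j' : ℝ) - i')) →
    (1 - ε) * (((j : ℝ) - i) + ((j' : ℝ) - i')) <
      (editDistance (strSlice S i j) (strSlice S i' j') : ℝ)

/-- An infinite weak ε-synchronization string: for all `1 ≤ i < j < k`,
`ED(S[i,j), S[j,k)) ≥ ⌊(1-ε)(k-i)⌋`. -/
def IsInfWeakSyncString {α : Type*} (ε : ℝ) (f : ℕ → α) : Prop :=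
  ∀ i j k : ℕ, 1 ≤ i → i < j → j < k →
    ((⌊(1 - ε) * ((k : ℝ) - (i : ℝ))⌋ : ℤ) : ℝ) ≤
      (editDistance (islice f i j) (islice f j k) : ℝ)

lemma lcs_bddAbove {α : Type*} (S T : List α) :
    BddAbove {n | ∃ U : List α, U.length = n ∧ U.Sublist S ∧ U.Sublist T} :=
  ⟨S.length, fun n ⟨U, hU, hUS, _⟩ => hU ▸ hUS.length_le⟩

lemma le_lcsLen {α : Type*} {S T U : List α} (h1 : U.Sublist S) (h2 : U.Sublist T) :
    U.length ≤ lcsLen S T := le_csSup (lcs_bddAbove S T) ⟨U, rfl, h1, h2⟩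

lemma lcsLen_spec {α : Type*} (S T : List α) :
    ∃ U : List α, U.length = lcsLen S T ∧ U.Sublist S ∧ U.Sublist T := by
  have := Nat.sSup_mem (s := {n | ∃ U : List α, U.length = n ∧ U.Sublist S ∧ U.Sublist T})
    ⟨0, [], rfl, List.nil_sublist _, List.nil_sublist _⟩ (lcs_bddAbove S T)
  exact this

lemma islice_length {α : Type*} (f : ℕ → α) (a b : ℕ) : (islice f a b).length = b - a := by
  simp [islice]

lemma islice_succ {α : Type*} (f : ℕ → α) {a b : ℕ} (h : a ≤ b) :
    islice f a (b + 1) = islice f a b ++ [f b] := by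
  unfold islice
  rw [show b + 1 - a = (b - a) + 1 by omega, List.range_succ, List.map_append]
  simp only [List.map_cons, List.map_nil]
  rw [show a + (b - a) = b by omega]

lemma fm_length_le {α β : Type*} (g : α → Option β) {l l' : List α} (h : l.Sublist l') :
    l.length + (l'.filterMap g).length ≤ l'.length + (l.filterMap g).length := by
  induction h with
  | slnil => simp
  | @cons l₁ l₂ a h ih =>
      have h2 : ((a :: l₂).filterMap g).length ≤ (l₂.filterMap g).length + 1 := by
        rw [List.filterMap_cons]; cases g a <;> simp
      simp only [List.length_cons]
      omega
  | @cons_cons l₁ l₂ a h ih =>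
      simp only [List.filterMap_cons, List.length_cons]
      cases g a <;> simp <;> omega

def cnt1 (T : ℕ → ℕ) (t : ℕ) : ℕ := ((Finset.Icc 1 t).filter fun q => T q = 1).card

lemma cnt1_mono (T : ℕ → ℕ) : Monotone (cnt1 T) := fun a b h =>
  Finset.card_le_card (Finset.filter_subset_filter _ (Finset.Icc_subset_Icc_right h))

lemma cnt1_succ (T : ℕ → ℕ) (p : ℕ) (hp : 1 ≤ p) :
    cnt1 T p = cnt1 T (p - 1) + (if T p = 1 then 1 else 0) := by
  unfold cnt1
  have hins : Finset.Icc 1 p = insert p (Finset.Icc 1 (p - 1)) := by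
    ext q; simp only [Finset.mem_Icc, Finset.mem_insert]; omega
  rw [hins, Finset.filter_insert]
  by_cases h : T p = 1
  · rw [if_pos h, if_pos h, Finset.card_insert_of_notMem]
    simp only [Finset.mem_filter, Finset.mem_Icc]
    omega
  · rw [if_neg h, if_neg h, add_zero]

def gmap : ℕ → Option Bool := fun n => if n = 4 then some true else if n = 1 then some false else none
def hmap : ℕ → ℕ := fun n => if n = 4 then 1 else n

lemma slice_map_T (T W : ℕ → ℕ) (hh : ∀ p, 1 ≤ p → hmap (W p) = T p)
    (a b : ℕ) (ha : 1 ≤ a) : (islice W a b).map hmap = islice T a b := by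
  unfold islice
  rw [List.map_map]
  apply List.map_congr_left
  intro t ht
  exact hh _ (by omega)

lemma slice_fm (T : ℕ → ℕ) (S : ℕ → Bool) (W : ℕ → ℕ)
    (hg : ∀ p, 1 ≤ p → gmap (W p) = if T p = 1 then some (S (cnt1 T p)) else none) :
    ∀ n i, 1 ≤ i →
      (islice W i (i + n)).filterMap gmap
        = islice S (cnt1 T (i - 1) + 1) (cnt1 T (i + n - 1) + 1) := by
  intro n
  induction n with
  | zero => intro i hi; simp [islice]
  | succ n ih =>
    intro i hi
    set p := i + n with hpdef
    have hstep : islice W i (i + (n + 1)) = islice W i (i + n) ++ [W p] := by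
      rw [show i + (n + 1) = (i + n) + 1 by omega]
      exact islice_succ W (by omega)
    rw [hstep, List.filterMap_append, ih i hi]
    have hp : 1 ≤ p := by omega
    have harith : i + (n + 1) - 1 = p := by omega
    have harith2 : i + n - 1 = p - 1 := by omega
    rw [harith, harith2]
    by_cases hT : T p = 1
    · have hc : cnt1 T p = cnt1 T (p - 1) + 1 := by
        have := cnt1_succ T p hp; simp [hT] at this; omega
      have hg' : gmap (W p) = some (S (cnt1 T p)) := by rw [hg p hp, if_pos hT]
      have hmono : cnt1 T (i - 1) + 1 ≤ cnt1 T (p - 1) + 1 := by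
        have := cnt1_mono T (show i - 1 ≤ p - 1 by omega); omega
      rw [hc, islice_succ S hmono]
      simp only [List.filterMap_cons, hg', List.filterMap_nil]
      rw [hc]
    · have hc : cnt1 T p = cnt1 T (p - 1) := by
        have := cnt1_succ T p hp; simp [hT] at this; omega
      have hg' : gmap (W p) = none := by rw [hg p hp, if_neg hT]
      simp only [List.filterMap_cons, hg', List.filterMap_nil, List.append_nil, hc]

lemma islice_one {α : Type*} (f : ℕ → α) (a : ℕ) : islice f a (a + 1) = [f a] := by
  simp [islice, show a + 1 - a = 1 by omega, List.range_succ]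

lemma islice_two {α : Type*} (f : ℕ → α) (a : ℕ) : islice f a (a + 2) = [f a, f (a + 1)] := by
  rw [show a + 2 = (a + 1) + 1 by omega, islice_succ f (by omega), islice_one]; rfl

lemma ones_window (T : ℕ → ℕ) (hTrange : ∀ p : ℕ, 1 ≤ p → T p ∈ ({1, 2, 3} : Set ℕ))
    (hsf : ∀ i l : ℕ, 1 ≤ i → 1 ≤ l →
      islice T i (i + l) ≠ islice T (i + l) (i + 2 * l)) :
    ∀ a, 1 ≤ a → ∃ p, a ≤ p ∧ p ≤ a + 3 ∧ T p = 1 := by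
  intro a ha
  by_contra hcon
  push_neg at hcon
  have hv : ∀ t, t ≤ 3 → T (a + t) = 2 ∨ T (a + t) = 3 := by
    intro t ht
    have h1 := hTrange (a + t) (by omega)
    have h2 := hcon (a + t) (by omega) (by omega)
    simp only [Set.mem_insert_iff, Set.mem_singleton_iff] at h1
    tauto
  have hne1 : ∀ b, a ≤ b → T b ≠ T (b + 1) := by
    intro b hb heq
    have := hsf b 1 (by omega) le_rfl
    rw [show b + 2 * 1 = (b + 1) + 1 by omega, show b + 1 * 1 = b + 1 by omega] at this
    rw [islice_one, islice_one, heq] at this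
    exact this rfl
  have hne2 : ¬(T a = T (a + 2) ∧ T (a + 1) = T (a + 3)) := by
    rintro ⟨h1, h2⟩
    have := hsf a 2 (by omega) (by omega)
    rw [show a + 2 * 2 = (a + 2) + 2 by omega] at this
    rw [islice_two, islice_two, h1, h2] at this
    rw [show a + 2 + 1 = a + 3 by omega] at this
    exact this rfl
  have v0 := hv 0 (by omega); have v1 := hv 1 (by omega)
  have v2 := hv 2 (by omega); have v3 := hv 3 (by omega)
  have n0 := hne1 a le_rfl
  have n1 := hne1 (a + 1) (by omega)
  have n2 := hne1 (a + 2) (by omega)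
  rw [show a + 0 = a by omega] at v0
  rw [show a + 1 + 1 = a + 2 by omega] at n1
  rw [show a + 2 + 1 = a + 3 by omega] at n2
  rcases v0 with h0 | h0 <;> rcases v1 with h1 | h1 <;> rcases v2 with h2 | h2 <;>
    rcases v3 with h3 | h3 <;> simp_all

lemma cnt_lb (T : ℕ → ℕ) (hwin : ∀ a, 1 ≤ a → ∃ p, a ≤ p ∧ p ≤ a + 3 ∧ T p = 1) :
    ∀ n i, 1 ≤ i → 4 * cnt1 T (i - 1) + n ≤ 4 * cnt1 T (i + n - 1) + 3 := by
  intro n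
  induction n using Nat.strong_induction_on with
  | _ n ih =>
    intro i hi
    by_cases h : n ≤ 3
    · have := cnt1_mono T (show i - 1 ≤ i + n - 1 by omega)
      omega
    · obtain ⟨p, hp1, hp2, hp3⟩ := hwin i hi
      have hcp : cnt1 T p = cnt1 T (p - 1) + 1 := by
        have := cnt1_succ T p (by omega); simp [hp3] at this; omega
      have hm1 := cnt1_mono T (show i - 1 ≤ p - 1 by omega)
      have hm2 := cnt1_mono T (show p ≤ i + 3 by omega)
      have h2 := ih (n - 4) (by omega) (i + 4) (by omega)
      rw [show i + 4 + (n - 4) - 1 = i + n - 1 by omega, show i + 4 - 1 = i + 3 by omega] at h2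
      omega


lemma real_core (ε edw M K : ℝ) (hε : 11 / 12 < ε) (hε1 : ε < 1)
    (hfl : (12 - 12 * ε) * M - 1 < edw) (hdens : K ≤ 4 * M + 3) (hM : 0 ≤ M)
    (hsmall : 1 ≤ (1 - ε) * K) : (1 - ε) * K < edw := by
  nlinarith [mul_nonneg (by linarith : (0:ℝ) ≤ 1 - ε) (by linarith : (0:ℝ) ≤ 4 * M + 3 - K)]

lemma nat_core (i j k ci cj ck uln z lcsS lcsW eds edw : ℕ)
    (hUlen : uln = lcsW)
    (hUA : uln ≤ j - i) (hUB : uln ≤ k - j)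
    (hedw : edw = (j - i) + (k - j) - 2 * lcsW)
    (heds : eds = (cj - ci) + (ck - cj) - 2 * lcsS)
    (hz : z ≤ lcsS)
    (hz1 : uln + (cj - ci) ≤ (j - i) + z)
    (hz2 : uln + (ck - cj) ≤ (k - j) + z) :
    eds ≤ edw := by omega


/-- Let `ε ∈ (11/12, 1)`, `T` an infinite square-free string over
`{1,2,3}`, and `S` an infinite binary weak `(12ε−11)`-synchronization string.
If `W` agrees with `T` except that the `i`-th occurrence of the symbol `1` in
`T` is replaced by `4` exactly when `S[i] = 1`, then `W` is an infinite
ε-synchronization string (over the size-four alphabet `{1,2,3,4}`). -/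
theorem modified_squarefree_isInfSyncString (ε : ℝ)
    (hε : 11 / 12 < ε) (hε1 : ε < 1)
    (T : ℕ → ℕ) (hTrange : ∀ p : ℕ, 1 ≤ p → T p ∈ ({1, 2, 3} : Set ℕ))
    (hsf : ∀ i l : ℕ, 1 ≤ i → 1 ≤ l →
      islice T i (i + l) ≠ islice T (i + l) (i + 2 * l))
    (S : ℕ → Bool) (hS : IsInfWeakSyncString (12 * ε - 11) S)
    (W : ℕ → ℕ)
    (hW1 : ∀ p : ℕ, 1 ≤ p → T p ≠ 1 → W p = T p)
    (hW2 : ∀ p : ℕ, 1 ≤ p → T p = 1 →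
      W p = if S (((Finset.Icc 1 p).filter fun q => T q = 1).card) = true
            then 4 else 1) :
    IsInfSyncString ε W := by
  -- pointwise projection facts
  have hTmem : ∀ p, 1 ≤ p → T p = 1 ∨ T p = 2 ∨ T p = 3 := by
    intro p hp
    have := hTrange p hp
    simpa using this
  have hh : ∀ p, 1 ≤ p → hmap (W p) = T p := by
    intro p hp
    by_cases h1 : T p = 1
    · have h2 := hW2 p hp h1
      by_cases hs : S (cnt1 T p) = true
      · rw [h1, h2, if_pos (by exact hs)]; rfl
      · rw [h1, h2, if_neg (by exact hs)]; rfl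
    · have hW := hW1 p hp h1
      rcases hTmem p hp with h | h | h
      · exact absurd h h1
      · rw [hW, h]; rfl
      · rw [hW, h]; rfl
  have hg : ∀ p, 1 ≤ p → gmap (W p) = if T p = 1 then some (S (cnt1 T p)) else none := by
    intro p hp
    by_cases h1 : T p = 1
    · have h2 := hW2 p hp h1
      rw [if_pos h1]
      by_cases hs : S (cnt1 T p) = true
      · rw [h2, if_pos (by exact hs), hs]; rfl
      · rw [h2, if_neg (by exact hs)]
        simp only [Bool.not_eq_true] at hs
        rw [hs]; rfl
    · have hW := hW1 p hp h1
      rw [if_neg h1]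
      rcases hTmem p hp with h | h | h
      · exact absurd h h1
      · rw [hW, h]; rfl
      · rw [hW, h]; rfl
  have hwin := ones_window T hTrange hsf
  intro i j k hi hij hjk
  set A := islice W i j with hAdef
  set B := islice W j k with hBdef
  set ci := cnt1 T (i - 1) with hcidef
  set cj := cnt1 T (j - 1) with hcjdef
  set ck := cnt1 T (k - 1) with hckdef
  have hmono1 : ci ≤ cj := by rw [hcidef, hcjdef]; exact cnt1_mono T (by omega)
  have hmono2 : cj ≤ ck := by rw [hcjdef, hckdef]; exact cnt1_mono T (by omega)
  clear_value ci cj ck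
  have hAlen : A.length = j - i := islice_length W i j
  have hBlen : B.length = k - j := islice_length W j k
  obtain ⟨U, hUlen, hUA, hUB⟩ := lcsLen_spec A B
  have hUA' := hUA.length_le
  have hUB' := hUB.length_le
  have hEDW : editDistance A B = A.length + B.length - 2 * lcsLen A B := rfl
  have hKcast : ((k : ℝ) - (i : ℝ)) = ((k - i : ℕ) : ℝ) := by
    have h1 : i ≤ k := by omega
    push_cast [h1]
    ring
  have hdpos : (0 : ℝ) < 1 - ε := by linarith
  have hd12 : (1 : ℝ) - ε < 1 / 12 := by linarith
  by_cases hsmall : (1 - ε) * ((k : ℝ) - (i : ℝ)) < 1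
  · -- small case: it suffices that the edit distance is at least 1
    have hED1 : 1 ≤ editDistance A B := by
      rcases Nat.eq_zero_or_pos (editDistance A B) with h0 | h0
      · exfalso
        rw [hEDW] at h0
        have hlcslen : lcsLen A B = U.length := hUlen.symm
        have hABeq : j - i = k - j ∧ U.length = A.length := by omega
        have hUAeq : U = A := hUA.eq_of_length hABeq.2
        have hUBeq : U = B := hUB.eq_of_length (by omega)
        have hAB : A = B := hUAeq ▸ hUBeq
        set l := j - i with hldef
        have hl : 1 ≤ l := by omega
        have hj : j = i + l := by omega
        have hk : k = i + 2 * l := by omega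
        have hmapAB : (islice W i j).map hmap = (islice W j k).map hmap := by
          rw [← hAdef, ← hBdef, hAB]
        rw [slice_map_T T W hh i j hi, slice_map_T T W hh j k (by omega)] at hmapAB
        rw [hj, hk] at hmapAB
        exact hsf i l hi hl (by rw [← hj] at hmapAB ⊢; rw [hj] at hmapAB ⊢; exact hmapAB)
      · exact h0
    have : (1 : ℝ) ≤ (editDistance A B : ℝ) := by exact_mod_cast hED1
    linarith
  · push_neg at hsmall
    have hKge : 13 ≤ k - i := by
      by_contra hcon
      push_neg at hcon
      have : ((k - i : ℕ) : ℝ) ≤ 12 := by exact_mod_cast Nat.lt_succ_iff.mp (by omega)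
      rw [hKcast] at hsmall
      nlinarith
    by_cases hmin : j - i ≤ 3 ∨ k - j ≤ 3
    · -- one side is tiny; edit distance ≥ (k-i) - 6
      have hlcs : lcsLen A B ≤ 3 := by
        rcases hmin with h | h
        · omega
        · omega
      have hEDge : k - i ≤ editDistance A B + 6 := by omega
      have hEDge' : ((k - i : ℕ) : ℝ) ≤ (editDistance A B : ℝ) + 6 := by exact_mod_cast hEDge
      have hK13 : (13 : ℝ) ≤ ((k - i : ℕ) : ℝ) := by exact_mod_cast hKge
      rw [hKcast]
      nlinarith
    · push_neg at hmin
      -- main case: both sides have length ≥ 4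
      -- identify the filterMap projections with slices of S
      have hfmA : A.filterMap gmap = islice S (ci + 1) (cj + 1) := by
        have h := slice_fm T S W hg (j - i) i hi
        rw [show i + (j - i) = j by omega] at h
        rw [← hcidef, ← hcjdef] at h
        exact h
      have hfmB : B.filterMap gmap = islice S (cj + 1) (ck + 1) := by
        have h := slice_fm T S W hg (k - j) j (by omega)
        rw [show j + (k - j) = k by omega] at h
        rw [← hcjdef, ← hckdef] at h
        exact h
      -- density facts
      have hd1 : 4 * ci + (j - i) ≤ 4 * cj + 3 := by
        have h := cnt_lb T hwin (j - i) i hi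
        rw [show i + (j - i) - 1 = j - 1 by omega] at h
        rw [← hcidef, ← hcjdef] at h
        exact h
      have hd2 : 4 * cj + (k - j) ≤ 4 * ck + 3 := by
        have h := cnt_lb T hwin (k - j) j (by omega)
        rw [show j + (k - j) - 1 = k - 1 by omega] at h
        rw [← hcjdef, ← hckdef] at h
        exact h
      have hcij : ci < cj := by omega
      have hcjk : cj < ck := by omega
      -- apply the weak synchronization property of S
      have hSw := hS (ci + 1) (cj + 1) (ck + 1) (by omega) (by omega) (by omega)
      -- edit distance of the S-slices
      set EDS := editDistance (islice S (ci + 1) (cj + 1)) (islice S (cj + 1) (ck + 1)) with hEDSdef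
      set lcsS := lcsLen (islice S (ci + 1) (cj + 1)) (islice S (cj + 1) (ck + 1)) with hlcsSdef
      have hEDSeq : EDS = (cj - ci) + (ck - cj) - 2 * lcsS := by
        rw [hEDSdef]
        unfold editDistance
        rw [islice_length, islice_length, ← hlcsSdef]
        congr 1 <;> omega
      clear_value EDS lcsS
      obtain ⟨US, hUSlen, hUS1, hUS2⟩ := lcsLen_spec (islice S (ci + 1) (cj + 1)) (islice S (cj + 1) (ck + 1))
      have hlcsS1 : lcsS ≤ cj - ci := by
        have := hUS1.length_le
        rw [islice_length] at this
        omega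
      have hlcsS2 : lcsS ≤ ck - cj := by
        have := hUS2.length_le
        rw [islice_length] at this
        omega
      -- Z := matched 1-symbols
      set Z := (U.filterMap gmap).length with hZdef
      have hZlcs : Z ≤ lcsS := by
        rw [hZdef, hlcsSdef]
        exact le_lcsLen (hfmA ▸ hUA.filterMap gmap) (hfmB ▸ hUB.filterMap gmap)
      clear_value Z
      have hZ1 : U.length + (cj - ci) ≤ (j - i) + Z := by
        have h := fm_length_le gmap hUA
        rw [hfmA, islice_length, hAlen] at h
        omega
      have hZ2 : U.length + (ck - cj) ≤ (k - j) + Z := by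
        have h := fm_length_le gmap hUB
        rw [hfmB, islice_length, hBlen] at h
        omega
      -- nat comparison EDS ≤ EDW
      have hedw' : editDistance A B = (j - i) + (k - j) - 2 * lcsLen A B := by
        rw [hEDW, hAlen, hBlen]
      have hUA'' : U.length ≤ j - i := hAlen ▸ hUA'
      have hUB'' : U.length ≤ k - j := hBlen ▸ hUB'
      have hnat : EDS ≤ editDistance A B :=
        nat_core i j k ci cj ck U.length Z lcsS (lcsLen A B) EDS (editDistance A B)
          hUlen hUA'' hUB'' hedw' hEDSeq hZlcs hZ1 hZ2
      -- real chain
      have hEDcast : (EDS : ℝ) ≤ (editDistance A B : ℝ) := Nat.cast_le.mpr hnat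
      have hwxcast : ((ck + 1 : ℕ) : ℝ) - ((ci + 1 : ℕ) : ℝ) = ((ck - ci : ℕ) : ℝ) := by
        have : ci ≤ ck := by omega
        push_cast [this]
        ring
      rw [hwxcast, show (1 - (12 * ε - 11)) = 12 - 12 * ε from by ring] at hSw
      have hfl : (12 - 12 * ε) * ((ck - ci : ℕ) : ℝ) - 1 < (EDS : ℝ) :=
        lt_of_lt_of_le (Int.sub_one_lt_floor _) hSw
      -- density: k - i ≤ 4 * (ck - ci) + 3
      have hd3 : 4 * ci + (k - i) ≤ 4 * ck + 3 := by
        have h := cnt_lb T hwin (k - i) i hi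
        rw [show i + (k - i) - 1 = k - 1 by omega] at h
        rw [← hcidef, ← hckdef] at h
        exact h
      have hdens : (k - i) ≤ 4 * (ck - ci) + 3 := by
        clear hS hsf hTrange hW1 hW2 hTmem hh hg hwin hSw hfmA hfmB hUA hUB hEDW hedw'
        omega
      have hdenscast : ((k - i : ℕ) : ℝ) ≤ 4 * ((ck - ci : ℕ) : ℝ) + 3 := by exact_mod_cast hdens
      have hMnn : (0 : ℝ) ≤ ((ck - ci : ℕ) : ℝ) := Nat.cast_nonneg _
      rw [hKcast] at hsmall ⊢
      exact real_core ε _ _ _ hε hε1 (lt_of_lt_of_le hfl hEDcast) hdenscast hMnn hsmall
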